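/- Let k₁, …, kₙ be natural numbers such that Next(kᵢ, k_{i+1}) holds for each i = 1, …, n−1. If a natural number d satisfies kᵢ ≤ d < k_{i+1} for some i ∈ {1, …, n−1}, then kᵢ is the best approximate of kₙ up to d (kₙ|_d = kᵢ). Further, if k₁ = 0, then every best approximate of kₙ (i.e., every Y such that kₙ|_d = Y for some d) is equal to kᵢ for some i ∈ {1, …, n}. -/

import Mathlib

lemma sin_nat_inj {a b : ℕ} (h : Real.sin a = Real.sin b) : a = b := by
  by_contra hne
  have hsub : Real.sin a - Real.sin b = 0 := by linarith
  rw [Real.sin_sub_sin] at hsub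
  rcases mul_eq_zero.mp hsub with h1 | h2
  · rcases mul_eq_zero.mp h1 with h3 | h4
    · norm_num at h3
    · rw [Real.sin_eq_zero_iff] at h4
      obtain ⟨m, hm⟩ := h4
      have hm0 : m ≠ 0 := by
        rintro rfl
        simp at hm
        have : (a : ℝ) = b := by linarith
        exact hne (by exact_mod_cast this)
      have key : ((2 * m : ℤ) : ℝ) * Real.pi = ((a : ℤ) - (b : ℤ) : ℤ) := by
        push_cast
        linarith
      exact (irrational_pi.intCast_mul (by omega : (2 * m : ℤ) ≠ 0)).ne_int _ key
  · rw [Real.cos_eq_zero_iff] at h2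
    obtain ⟨m, hm⟩ := h2
    have key : (((2 * m + 1) : ℤ) : ℝ) * Real.pi = ((a : ℤ) + (b : ℤ) : ℤ) := by
      push_cast
      linarith
    exact (irrational_pi.intCast_mul (by omega : (2 * m + 1 : ℤ) ≠ 0)).ne_int _ key

/-- `BestApp X d Y` says that `Y` is the best approximate of `X` up to `d`
(written `X|_d = Y`): `Y ≤ d`, `sin Y ≤ sin X`, and for every `Z ≤ d` with
`Z ≠ Y` and `sin Z ≤ sin X` one has `sin Z < sin Y`. -/
def BestApp (X d Y : ℕ) : Prop :=
  Y ≤ d ∧ Real.sin Y ≤ Real.sin X ∧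
    ∀ Z : ℕ, Z ≤ d → Z ≠ Y → Real.sin Z ≤ Real.sin X → Real.sin Z < Real.sin Y


/-- `Next X₁ X₂` holds iff `X₁ < X₂`, `sin X₁ < sin X₂`, and for every `Z < X₂`
either `sin Z ≤ sin X₁` or `sin X₂ < sin Z`. -/
def Next (X₁ X₂ : ℕ) : Prop :=
  X₁ < X₂ ∧ Real.sin X₁ < Real.sin X₂ ∧
    ∀ Z : ℕ, Z < X₂ → Real.sin Z ≤ Real.sin X₁ ∨ Real.sin X₂ < Real.sin Z


theorem bestApp_of_next_chain (n : ℕ) (hn : 0 < n) (k : Fin n → ℕ)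
    (hnext : ∀ i : Fin n, ∀ h : i.1 + 1 < n, Next (k i) (k ⟨i.1 + 1, h⟩)) :
    (∀ d : ℕ, ∀ i : Fin n, ∀ h : i.1 + 1 < n,
        k i ≤ d → d < k ⟨i.1 + 1, h⟩ →
          BestApp (k ⟨n - 1, by omega⟩) d (k i)) ∧
      (k ⟨0, hn⟩ = 0 →
        ∀ d Y : ℕ, BestApp (k ⟨n - 1, by omega⟩) d Y → ∃ i : Fin n, Y = k i) := by
  have hmn : n - 1 < n := by omega
  -- sine values are monotone along the chain
  have mono : ∀ j (hj : j < n) i (hij : i ≤ j),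
      Real.sin (k ⟨i, by omega⟩) ≤ Real.sin (k ⟨j, hj⟩) := by
    intro j
    induction j with
    | zero =>
      intro hj i hij
      interval_cases i
      exact le_refl _
    | succ j ih =>
      intro hj i hij
      rcases Nat.eq_or_lt_of_le hij with rfl | hlt
      · exact le_refl _
      · have hj' : j < n := by omega
        have h2 := (hnext ⟨j, hj'⟩ hj).2.1
        exact le_trans (ih hj' i (by omega)) (le_of_lt h2)
  -- escape: if Z < k (j+1) and sin (k (j+1)) < sin Z then sin (k (n-1)) < sin Z
  have escape : ∀ c j (hj : j + 1 < n), n - 1 = j + 1 + c → ∀ Z : ℕ,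
      Z < k ⟨j + 1, hj⟩ → Real.sin (k ⟨j + 1, hj⟩) < Real.sin Z →
      Real.sin (k ⟨n - 1, hmn⟩) < Real.sin Z := by
    intro c
    induction c with
    | zero =>
      intro j hj hc Z hZ hsin
      have : (⟨n - 1, hmn⟩ : Fin n) = ⟨j + 1, hj⟩ := by
        apply Fin.ext; simp; omega
      rw [this]
      exact hsin
    | succ c ih =>
      intro j hj hc Z hZ hsin
      have hj2 : j + 1 + 1 < n := by omega
      obtain ⟨hlt, hs, hall⟩ := hnext ⟨j + 1, hj⟩ hj2
      rcases hall Z (lt_trans hZ hlt) with h1 | h2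
      · linarith
      · exact ih (j + 1) hj2 (by omega) Z (lt_trans hZ hlt) h2
  have part1 : ∀ d : ℕ, ∀ i : Fin n, ∀ h : i.1 + 1 < n,
      k i ≤ d → d < k ⟨i.1 + 1, h⟩ → BestApp (k ⟨n - 1, hmn⟩) d (k i) := by
    intro d i h hle hlt
    refine ⟨hle, ?_, ?_⟩
    · have := mono (n - 1) hmn i.1 (by omega)
      simpa using this
    · intro Z hZd hZne hZle
      obtain ⟨hlt', hsin', hall⟩ := hnext i h
      rcases hall Z (by omega) with h1 | h2
      · have hne : Real.sin Z ≠ Real.sin (k i) := fun heq => hZne (sin_nat_inj heq)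
        exact lt_of_le_of_ne h1 hne
      · have := escape (n - 1 - (i.1 + 1)) i.1 h (by omega) Z (by omega) h2
        linarith
  refine ⟨part1, ?_⟩
  intro h0 d Y hBA
  obtain ⟨hYd, hYle, hYbest⟩ := hBA
  by_cases hd : k ⟨n - 1, hmn⟩ ≤ d
  · refine ⟨⟨n - 1, hmn⟩, ?_⟩
    by_contra hne
    have := hYbest (k ⟨n - 1, hmn⟩) hd (fun heq => hne heq.symm) (le_refl _)
    linarith
  · push_neg at hd
    -- find maximal i with k i ≤ d
    have find : ∀ c t (ht : t < n), n - 1 - t ≤ c → k ⟨t, ht⟩ ≤ d →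
        ∃ i, ∃ hi : i + 1 < n, k ⟨i, by omega⟩ ≤ d ∧ d < k ⟨i + 1, hi⟩ := by
      intro c
      induction c with
      | zero =>
        intro t ht hc hkd
        have : (⟨t, ht⟩ : Fin n) = ⟨n - 1, hmn⟩ := by apply Fin.ext; simp; omega
        rw [this] at hkd
        omega
      | succ c ih =>
        intro t ht hc hkd
        by_cases h1 : t + 1 < n
        · rcases le_or_gt (k ⟨t + 1, h1⟩) d with h2 | h2
          · exact ih (t + 1) h1 (by omega) h2
          · exact ⟨t, h1, hkd, h2⟩
        · have : (⟨t, ht⟩ : Fin n) = ⟨n - 1, hmn⟩ := by apply Fin.ext; simp; omega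
          rw [this] at hkd
          omega
    obtain ⟨i, hi, hkid, hdki⟩ := find (n - 1) 0 hn (by omega) (by rw [h0]; omega)
    obtain ⟨_, hkle, hkbest⟩ := part1 d ⟨i, by omega⟩ hi hkid hdki
    refine ⟨⟨i, by omega⟩, ?_⟩
    by_contra hne
    have h1 := hYbest (k ⟨i, by omega⟩) hkid (fun heq => hne heq.symm) hkle
    have h2 := hkbest Y hYd hne hYle
    linarith
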